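/- Let Z and Y be independent standard normal random variables and W = Z + Y. For any fixed constant a ∈ ℝ, the function t ↦ P(Z > a | W > t) is monotone non-decreasing in t. -/

import Mathlib

open MeasureTheory ProbabilityTheory Set
open scoped ENNReal

namespace DCAux

noncomputable def Kc (w : ℝ) : ℝ :=
  ((Real.sqrt (2 * Real.pi))⁻¹) ^ 2 * Real.exp (-(w ^ 2) / 4)

lemma Kc_pos (w : ℝ) : 0 < Kc w := by
  have h : 0 < Real.sqrt (2 * Real.pi) := Real.sqrt_pos.mpr (by positivity)
  unfold Kc
  positivity

noncomputable def Ia (a w : ℝ) : ℝ := ∫ u in Ioi (a - w / 2), Real.exp (-u ^ 2)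

lemma integrable_exp_neg_sq : Integrable (fun u : ℝ => Real.exp (-u ^ 2)) := by
  simpa using integrable_exp_neg_mul_sq (one_pos)

lemma integrable_exp_neg_sq_sub (c : ℝ) :
    Integrable (fun z : ℝ => Real.exp (-(z - c) ^ 2)) :=
  integrable_exp_neg_sq.comp_sub_right c

lemma Ia_nonneg (a w : ℝ) : 0 ≤ Ia a w :=
  setIntegral_nonneg measurableSet_Ioi fun u _ => (Real.exp_pos _).le

lemma Ia_mono (a : ℝ) : Monotone (Ia a) := by
  intro w₁ w₂ h
  refine setIntegral_mono_set integrable_exp_neg_sq.integrableOn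
    (Filter.Eventually.of_forall fun u => (Real.exp_pos _).le) ?_
  exact HasSubset.Subset.eventuallyLE (Ioi_subset_Ioi (by linarith))

noncomputable def hf (a w : ℝ) : ℝ≥0∞ := ENNReal.ofReal (Kc w) * ENNReal.ofReal (Ia a w)

noncomputable def Hf (w : ℝ) : ℝ≥0∞ :=
  ENNReal.ofReal (Kc w) * ENNReal.ofReal (Real.sqrt Real.pi)

lemma measurable_Kc : Measurable Kc := by
  unfold Kc; fun_prop

lemma measurable_hf (a : ℝ) : Measurable (hf a) :=
  (measurable_Kc.ennreal_ofReal).mul ((Ia_mono a).measurable.ennreal_ofReal)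

lemma measurable_Hf : Measurable Hf :=
  (measurable_Kc.ennreal_ofReal).mul measurable_const

lemma Hf_pos (w : ℝ) : 0 < Hf w := by
  unfold Hf
  have h1 : 0 < ENNReal.ofReal (Kc w) := ENNReal.ofReal_pos.mpr (Kc_pos w)
  have h2 : 0 < ENNReal.ofReal (Real.sqrt Real.pi) :=
    ENNReal.ofReal_pos.mpr (Real.sqrt_pos.mpr Real.pi_pos)
  exact ENNReal.mul_pos h1.ne' h2.ne'

lemma hf_eq_mul (a w : ℝ) :
    hf a w = ENNReal.ofReal (Ia a w / Real.sqrt Real.pi) * Hf w := by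
  have hπ : (0:ℝ) < Real.sqrt Real.pi := Real.sqrt_pos.mpr Real.pi_pos
  have h : ENNReal.ofReal (Ia a w)
      = ENNReal.ofReal (Ia a w / Real.sqrt Real.pi) * ENNReal.ofReal (Real.sqrt Real.pi) := by
    rw [← ENNReal.ofReal_mul (div_nonneg (Ia_nonneg a w) hπ.le), div_mul_cancel₀ _ hπ.ne']
  rw [hf, Hf, h]
  ring

lemma translation (c b : ℝ) :
    ∫ z in Ioi b, Real.exp (-(z - c) ^ 2) = ∫ u in Ioi (b - c), Real.exp (-u ^ 2) := by
  rw [← integral_indicator measurableSet_Ioi, ← integral_indicator measurableSet_Ioi]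
  rw [← integral_sub_right_eq_self
    (fun u : ℝ => (Ioi (b - c)).indicator (fun u : ℝ => Real.exp (-u ^ 2)) u) c]
  congr 1
  funext z
  by_cases hz : z ∈ Ioi b
  · have hz' : z - c ∈ Ioi (b - c) := by simpa [sub_lt_sub_iff_right] using hz
    rw [indicator_of_mem hz, indicator_of_mem hz']
  · have hz' : z - c ∉ Ioi (b - c) := by simpa [sub_lt_sub_iff_right] using hz
    rw [indicator_of_notMem hz, indicator_of_notMem hz']

lemma pdf_mul (w z : ℝ) :
    gaussianPDF 0 1 z * gaussianPDF 0 1 (w - z)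
      = ENNReal.ofReal (Kc w * Real.exp (-(z - w / 2) ^ 2)) := by
  rw [gaussianPDF, gaussianPDF, ← ENNReal.ofReal_mul (gaussianPDFReal_nonneg 0 1 z)]
  congr 1
  simp only [gaussianPDFReal, NNReal.coe_one, mul_one, sub_zero]
  rw [Kc, mul_assoc ((Real.sqrt (2 * Real.pi))⁻¹) _ _,
    mul_comm (Real.exp (-z ^ 2 / 2)) _, ← mul_assoc, ← mul_assoc]
  have h1 : ((Real.sqrt (2 * Real.pi))⁻¹) * (Real.sqrt (2 * Real.pi))⁻¹
      = ((Real.sqrt (2 * Real.pi))⁻¹) ^ 2 := (sq _).symm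
  rw [h1, mul_assoc, mul_assoc, ← Real.exp_add, ← Real.exp_add]
  congr 1
  ring

lemma lint_eq (s : Set ℝ) (w : ℝ) :
    ∫⁻ z in s, gaussianPDF 0 1 z * gaussianPDF 0 1 (w - z) ∂volume
      = ENNReal.ofReal (Kc w) * ENNReal.ofReal (∫ z in s, Real.exp (-(z - w / 2) ^ 2)) := by
  simp_rw [pdf_mul, ENNReal.ofReal_mul (Kc_pos w).le]
  rw [lintegral_const_mul _ (by fun_prop)]
  congr 1
  rw [← ofReal_integral_eq_lintegral_ofReal (integrable_exp_neg_sq_sub (w / 2)).integrableOn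
    (Filter.Eventually.of_forall fun z => (Real.exp_pos _).le)]

lemma hf_eq (a w : ℝ) :
    ∫⁻ z in Ioi a, gaussianPDF 0 1 z * gaussianPDF 0 1 (w - z) ∂volume = hf a w := by
  rw [lint_eq, translation]; rfl

lemma Hf_eq (w : ℝ) :
    ∫⁻ z, gaussianPDF 0 1 z * gaussianPDF 0 1 (w - z) ∂volume = Hf w := by
  rw [← Measure.restrict_univ (μ := (volume : Measure ℝ)), lint_eq]
  unfold Hf
  congr 2
  rw [Measure.restrict_univ,
    integral_sub_right_eq_self (fun u : ℝ => Real.exp (-u ^ 2)) (w / 2)]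
  simpa using integral_gaussian 1

section Rep

variable {Ω : Type*} [MeasurableSpace Ω] (μpr : Measure Ω) [IsProbabilityMeasure μpr]
  (Z Y : Ω → ℝ) (hZ : Measurable Z) (hY : Measurable Y)
  (hind : IndepFun Z Y μpr)
  (hdZ : μpr.map Z = gaussianReal 0 1) (hdY : μpr.map Y = gaussianReal 0 1)

include hZ hY hind hdZ hdY in
lemma rep (B : Set ℝ) (hB : MeasurableSet B) (τ : ℝ) :
    μpr ((fun ω => (Z ω, Y ω)) ⁻¹' {p : ℝ × ℝ | p.1 ∈ B ∧ τ < p.1 + p.2})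
      = ∫⁻ w in Ioi τ, ∫⁻ z in B, gaussianPDF 0 1 z * gaussianPDF 0 1 (w - z) ∂volume ∂volume := by
  have hS : MeasurableSet {p : ℝ × ℝ | p.1 ∈ B ∧ τ < p.1 + p.2} := by
    rw [Set.setOf_and]
    exact (hB.preimage measurable_fst).inter
      (measurableSet_lt measurable_const (measurable_fst.add measurable_snd))
  rw [← Measure.map_apply (hZ.prodMk hY) hS,
    (indepFun_iff_map_prod_eq_prod_map_map hZ.aemeasurable hY.aemeasurable).mp hind, hdZ, hdY,
    Measure.prod_apply hS]
  have hγ : gaussianReal 0 1 = volume.withDensity (gaussianPDF 0 1) :=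
    gaussianReal_of_var_ne_zero 0 one_ne_zero
  have hind' : (fun z : ℝ => (gaussianReal 0 1) (Prod.mk z ⁻¹' {p : ℝ × ℝ | p.1 ∈ B ∧ τ < p.1 + p.2}))
      = B.indicator (fun z => (gaussianReal 0 1) (Ioi (τ - z))) := by
    funext z
    by_cases hz : z ∈ B
    · rw [indicator_of_mem hz]
      congr 1
      ext y
      simp [hz, sub_lt_iff_lt_add']
    · rw [indicator_of_notMem hz]
      have : (Prod.mk z ⁻¹' {p : ℝ × ℝ | p.1 ∈ B ∧ τ < p.1 + p.2}) = ∅ := by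
        ext y; simp [hz]
      rw [this, measure_empty]
  rw [hind', lintegral_indicator hB]
  have hinner : ∀ z : ℝ, (gaussianReal 0 1) (Ioi (τ - z))
      = ∫⁻ w in Ioi τ, gaussianPDF 0 1 (w - z) ∂volume := by
    intro z
    rw [hγ, withDensity_apply _ measurableSet_Ioi]
    have hmp : MeasurePreserving (fun w : ℝ => w - z) volume volume :=
      measurePreserving_sub_right volume z
    have heq : (fun w : ℝ => w - z) ⁻¹' (Ioi (τ - z)) = Ioi τ := by
      ext w; simp [sub_lt_sub_iff_right]
    have := hmp.setLIntegral_comp_preimage_emb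
      (MeasurableEquiv.subRight z).measurableEmbedding (gaussianPDF 0 1) (Ioi (τ - z))
    rw [heq] at this
    exact this.symm
  simp_rw [hinner]
  rw [hγ, restrict_withDensity hB,
    lintegral_withDensity_eq_lintegral_mul _ (measurable_gaussianPDF 0 1)
      (by
        have : Measurable fun z : ℝ => ∫⁻ w, gaussianPDF 0 1 (w - z) ∂(volume.restrict (Ioi τ)) :=
          Measurable.lintegral_prod_right'
            (f := fun p : ℝ × ℝ => gaussianPDF 0 1 (p.2 - p.1))
            ((measurable_gaussianPDF 0 1).comp (measurable_snd.sub measurable_fst))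
        exact this)]
  have hstep : ∀ z : ℝ, (gaussianPDF 0 1 * fun z => ∫⁻ w in Ioi τ, gaussianPDF 0 1 (w - z) ∂volume) z
      = ∫⁻ w in Ioi τ, gaussianPDF 0 1 z * gaussianPDF 0 1 (w - z) ∂volume := by
    intro z
    simp only [Pi.mul_apply]
    rw [lintegral_const_mul _
      (show Measurable fun w : ℝ => gaussianPDF 0 1 (w - z) from
        (measurable_gaussianPDF 0 1).comp (measurable_id.sub measurable_const))]
  rw [lintegral_congr hstep]
  exact lintegral_lintegral_swap
    (f := fun z w => gaussianPDF 0 1 z * gaussianPDF 0 1 (w - z))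
    (((measurable_gaussianPDF 0 1).comp measurable_fst).mul
      ((measurable_gaussianPDF 0 1).comp (measurable_snd.sub measurable_fst))).aemeasurable

include hZ hY hind hdZ hdY in
lemma repA (a τ : ℝ) :
    μpr ({ω | τ < Z ω + Y ω} ∩ {ω | a < Z ω}) = ∫⁻ w in Ioi τ, hf a w ∂volume := by
  have hset : {ω | τ < Z ω + Y ω} ∩ {ω | a < Z ω}
      = (fun ω => (Z ω, Y ω)) ⁻¹' {p : ℝ × ℝ | p.1 ∈ Ioi a ∧ τ < p.1 + p.2} := by
    ext ω; simp [and_comm]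
  rw [hset, rep μpr Z Y hZ hY hind hdZ hdY (Ioi a) measurableSet_Ioi τ]
  exact setLIntegral_congr_fun measurableSet_Ioi
    (fun w _ => hf_eq a w)

include hZ hY hind hdZ hdY in
lemma repN (τ : ℝ) :
    μpr {ω | τ < Z ω + Y ω} = ∫⁻ w in Ioi τ, Hf w ∂volume := by
  have hset : {ω | τ < Z ω + Y ω}
      = (fun ω => (Z ω, Y ω)) ⁻¹' {p : ℝ × ℝ | p.1 ∈ (univ : Set ℝ) ∧ τ < p.1 + p.2} := by
    ext ω; simp
  rw [hset, rep μpr Z Y hZ hY hind hdZ hdY univ MeasurableSet.univ τ]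
  refine setLIntegral_congr_fun measurableSet_Ioi
    (fun w _ => ?_)
  rw [Measure.restrict_univ]
  exact Hf_eq w

end Rep

lemma key_ineq (a s t : ℝ) (hst : s ≤ t) :
    (∫⁻ w in Ioi s, hf a w ∂volume) * (∫⁻ w in Ioi t, Hf w ∂volume)
      ≤ (∫⁻ w in Ioi t, hf a w ∂volume) * (∫⁻ w in Ioi s, Hf w ∂volume) := by
  have hsplit : Ioi s = Ioc s t ∪ Ioi t := (Ioc_union_Ioi_eq_Ioi hst).symm
  have hdisj : Disjoint (Ioc s t) (Ioi t) := Ioc_disjoint_Ioi le_rfl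
  set g : ℝ≥0∞ := ENNReal.ofReal (Ia a t / Real.sqrt Real.pi) with hg
  set B1 := ∫⁻ w in Ioc s t, hf a w ∂volume with hB1
  set M1 := ∫⁻ w in Ioc s t, Hf w ∂volume with hM1
  set At := ∫⁻ w in Ioi t, hf a w ∂volume with hAt
  set Nt := ∫⁻ w in Ioi t, Hf w ∂volume with hNt
  have hmono : ∀ w₁ w₂ : ℝ, w₁ ≤ w₂ →
      ENNReal.ofReal (Ia a w₁ / Real.sqrt Real.pi) ≤ ENNReal.ofReal (Ia a w₂ / Real.sqrt Real.pi) := by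
    intro w₁ w₂ h
    exact ENNReal.ofReal_le_ofReal
      (div_le_div_of_nonneg_right (Ia_mono a h) (Real.sqrt_pos.mpr Real.pi_pos).le)
  have hb1 : B1 ≤ g * M1 := by
    rw [hB1, hM1, ← lintegral_const_mul _ measurable_Hf]
    refine setLIntegral_mono (measurable_const.mul measurable_Hf) fun w hw => ?_
    rw [hf_eq_mul]
    exact mul_le_mul_left (hmono w t hw.2) _
  have hb2 : g * Nt ≤ At := by
    rw [hNt, hAt, ← lintegral_const_mul _ measurable_Hf]
    refine setLIntegral_mono (measurable_hf a) fun w hw => ?_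
    rw [hf_eq_mul]
    exact mul_le_mul_left (hmono t w (le_of_lt hw)) _
  have h1 : (∫⁻ w in Ioi s, hf a w ∂volume) = B1 + At := by
    rw [hsplit, lintegral_union measurableSet_Ioi hdisj]
  have h2 : (∫⁻ w in Ioi s, Hf w ∂volume) = M1 + Nt := by
    rw [hsplit, lintegral_union measurableSet_Ioi hdisj]
  rw [h1, h2]
  calc (B1 + At) * Nt = B1 * Nt + At * Nt := by rw [add_mul]
    _ ≤ (g * M1) * Nt + At * Nt := by gcongr
    _ = (g * Nt) * M1 + At * Nt := by ring
    _ ≤ At * M1 + At * Nt := by gcongr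
    _ = At * (M1 + Nt) := by ring

end DCAux

open DCAux in
/-- For independent standard normals `Z, Y` and `W = Z + Y`, the map
`t ↦ P(Z > a | W > t)` is non-decreasing. -/
theorem data_carving_p_value_monotone
    {Ω : Type*} [MeasurableSpace Ω] (μpr : Measure Ω) [IsProbabilityMeasure μpr]
    (Z Y : Ω → ℝ) (hZ : Measurable Z) (hY : Measurable Y)
    (hind : IndepFun Z Y μpr)
    (hdZ : μpr.map Z = gaussianReal 0 1)
    (hdY : μpr.map Y = gaussianReal 0 1)
    (a : ℝ) :
    Monotone fun t : ℝ => μpr[|{ω | t < Z ω + Y ω}] {ω | a < Z ω} := by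
  intro s t hst
  have hms : ∀ τ : ℝ, MeasurableSet {ω | τ < Z ω + Y ω} := fun τ =>
    measurableSet_lt measurable_const (hZ.add hY)
  simp only
  rw [cond_apply (hms s), cond_apply (hms t)]
  have hN : ∀ τ : ℝ, μpr {ω | τ < Z ω + Y ω} = ∫⁻ w in Ioi τ, Hf w ∂volume :=
    fun τ => repN μpr Z Y hZ hY hind hdZ hdY τ
  have hA : ∀ τ : ℝ, μpr ({ω | τ < Z ω + Y ω} ∩ {ω | a < Z ω})
      = ∫⁻ w in Ioi τ, hf a w ∂volume :=
    fun τ => repA μpr Z Y hZ hY hind hdZ hdY a τ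
  have hNpos : ∀ τ : ℝ, μpr {ω | τ < Z ω + Y ω} ≠ 0 := by
    intro τ
    rw [hN τ]
    have : 0 < ∫⁻ w in Ioi τ, Hf w ∂volume := by
      rw [lintegral_pos_iff_support measurable_Hf]
      have hsupp : Function.support Hf = univ := by
        ext w; simp [Function.support, (Hf_pos w).ne']
      rw [hsupp]
      simp [Real.volume_Ioi]
    exact this.ne'
  have hNfin : ∀ τ : ℝ, μpr {ω | τ < Z ω + Y ω} ≠ ∞ := fun τ => measure_ne_top _ _
  have hkey : μpr ({ω | s < Z ω + Y ω} ∩ {ω | a < Z ω}) * μpr {ω | t < Z ω + Y ω}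
      ≤ μpr ({ω | t < Z ω + Y ω} ∩ {ω | a < Z ω}) * μpr {ω | s < Z ω + Y ω} := by
    rw [hA s, hA t, hN s, hN t]
    exact key_ineq a s t hst
  set b := μpr {ω | s < Z ω + Y ω}
  set d := μpr {ω | t < Z ω + Y ω}
  set x := μpr ({ω | s < Z ω + Y ω} ∩ {ω | a < Z ω})
  set c := μpr ({ω | t < Z ω + Y ω} ∩ {ω | a < Z ω})
  calc b⁻¹ * x = b⁻¹ * d⁻¹ * (x * d) := by
        rw [mul_assoc, mul_comm d⁻¹ _, mul_assoc, ENNReal.mul_inv_cancel (hNpos t) (hNfin t),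
          mul_one]
    _ ≤ b⁻¹ * d⁻¹ * (c * b) := mul_le_mul_right hkey _
    _ = d⁻¹ * c * (b⁻¹ * b) := by ring
    _ = d⁻¹ * c := by rw [ENNReal.inv_mul_cancel (hNpos s) (hNfin s), mul_one]
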